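/- In the bidirectional structural model under Assumption 2, suppose σ > 0, γ1 > γ2², μxz ≠ 0, μyw ≠ 0 and βxy·βyx ≠ 1, and let k1 = ξyz/ξxz and k2 = ξxw/ξyw be the Probit coefficient ratios. Then the forward causal effect βxy is a root of the quadratic equation γ1·(k1² − 1)·x² + 2γ2·k1·(k1 − k2)·x + k1²·(1 − k2²) = 0. -/

import Mathlib

/-- the forward causal effect is a root of the sensitivity
quadratic equation under Assumption 2. -/
theorem stmt_11 (μx0 μy0 μxz μyw βxy βyx σ γ1 γ2 : ℝ)
    (hσ : 0 < σ) (hγ : γ2 ^ 2 < γ1)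
    (hμxz : μxz ≠ 0) (hμyw : μyw ≠ 0) (hβ : βxy * βyx ≠ 1)
    (c lam1 lam2 ξxz ξxw ξyz ξyw k1 k2 : ℝ)
    (hc : c = 1 / (1 - βxy * βyx))
    (hlam1 : lam1 = σ ^ 2 * c ^ 2 * (γ1 + 2 * βyx * γ2 + βyx ^ 2))
    (hlam2 : lam2 = σ ^ 2 * c ^ 2 * (βxy ^ 2 * γ1 + 2 * βxy * γ2 + 1))
    (hξxz : ξxz = c * μxz / Real.sqrt lam1)
    (hξxw : ξxw = c * βyx * μyw / Real.sqrt lam1)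
    (hξyz : ξyz = c * βxy * μxz / Real.sqrt lam2)
    (hξyw : ξyw = c * μyw / Real.sqrt lam2)
    (hk1 : k1 = ξyz / ξxz) (hk2 : k2 = ξxw / ξyw) :
    γ1 * (k1 ^ 2 - 1) * βxy ^ 2 + 2 * γ2 * k1 * (k1 - k2) * βxy
      + k1 ^ 2 * (1 - k2 ^ 2) = 0 := by
  have hc0 : c ≠ 0 := by
    rw [hc]
    exact one_div_ne_zero (sub_ne_zero.mpr (Ne.symm hβ))
  have hL1 : 0 < γ1 + 2 * βyx * γ2 + βyx ^ 2 := by nlinarith [sq_nonneg (γ2 + βyx)]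
  have hL2 : 0 < βxy ^ 2 * γ1 + 2 * βxy * γ2 + 1 := by
    rcases eq_or_ne βxy 0 with h | h
    · simp [h]
    · nlinarith [sq_nonneg (βxy * γ2 + 1), mul_pos (pow_pos (abs_pos.mpr h) 2)
        (sub_pos.mpr hγ), sq_abs βxy]
  have hlam1p : 0 < lam1 := by
    rw [hlam1]; positivity
  have hlam2p : 0 < lam2 := by
    rw [hlam2]; positivity
  set s1 := Real.sqrt lam1 with hs1def
  set s2 := Real.sqrt lam2 with hs2def
  have hs1 : 0 < s1 := Real.sqrt_pos.mpr hlam1p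
  have hs2 : 0 < s2 := Real.sqrt_pos.mpr hlam2p
  have hq1 : s1 ^ 2 = σ ^ 2 * c ^ 2 * (γ1 + 2 * βyx * γ2 + βyx ^ 2) := by
    rw [hs1def, Real.sq_sqrt hlam1p.le, hlam1]
  have hq2 : s2 ^ 2 = σ ^ 2 * c ^ 2 * (βxy ^ 2 * γ1 + 2 * βxy * γ2 + 1) := by
    rw [hs2def, Real.sq_sqrt hlam2p.le, hlam2]
  have hk1' : k1 = βxy * s1 / s2 := by
    rw [hk1, hξyz, hξxz]
    field_simp
  have hk2' : k2 = βyx * s2 / s1 := by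
    rw [hk2, hξxw, hξyw]
    field_simp
  rw [hk1', hk2']
  field_simp
  linear_combination (βxy^2*(βxy^2*γ1+2*βxy*γ2+1)) * hq1 - (βxy^2*(γ1+2*βyx*γ2+βyx^2)) * hq2
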